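/- arXiv:1510.04663 — 3 statements merged into one kernel-verified Lean document; each statement's English description precedes it below -/
import Mathlib

section
/- Let (γ_n) be a sequence of sub-probability measures on ℝᵈ that totally disintegrates, i.e., for every r > 0, sup_{x ∈ ℝᵈ} γ_n(B_r(x)) → 0 as n → ∞. Then for any sequence (η_n) of sub-probability measures on ℝᵈ, any k ≥ 1, and any continuous function f : (ℝ^{2d})^k → ℝ that is bounded and vanishes as the diameter of its argument points tends to infinity, one has ∫ f(x₁,y₁,…,x_k,y_k) Π_i γ_n(dx_i) Π_i η_n(dy_i) → 0. -/
open MeasureTheory Filter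

/-- If `(γ_n)` totally disintegrates (its concentration function tends to `0`), then
integrals of functions vanishing at infinity against `Π γ_n ⊗ Π η_n` tend to `0`. -/
theorem totally_disintegrating_integral_tendsto_zero (d k : ℕ) (hk : 1 ≤ k)
    (γ η : ℕ → Measure (EuclideanSpace ℝ (Fin d)))
    (hγ1 : ∀ n, γ n Set.univ ≤ 1) (hη1 : ∀ n, η n Set.univ ≤ 1)
    (hdis : ∀ r : ℝ, 0 < r →
      Tendsto (fun n => ⨆ x : EuclideanSpace ℝ (Fin d), γ n (Metric.ball x r))
        atTop (nhds 0))
    (f : (Fin k → EuclideanSpace ℝ (Fin d)) → (Fin k → EuclideanSpace ℝ (Fin d)) → ℝ)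
    (hfc : Continuous (Function.uncurry f))
    (hfb : ∃ C, ∀ x y, |f x y| ≤ C)
    (hvanish : ∀ ε > (0 : ℝ), ∃ R : ℝ, ∀ x y,
      (∃ i j, R ≤ dist (x i) (y j) ∨ R ≤ dist (x i) (x j) ∨ R ≤ dist (y i) (y j)) →
      |f x y| ≤ ε) :
    Tendsto (fun n => ∫ x, ∫ y, f x y
        ∂(Measure.pi fun _ : Fin k => η n) ∂(Measure.pi fun _ : Fin k => γ n))
      atTop (nhds 0) := by
  rw [NormedAddCommGroup.tendsto_nhds_zero]
  intro ε hε
  obtain ⟨C₀, hC₀⟩ := hfb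
  set C : ℝ := max C₀ 0 with hCdef
  have hC0 : 0 ≤ C := le_max_right _ _
  have hC : ∀ x y, |f x y| ≤ C := fun x y => (hC₀ x y).trans (le_max_left _ _)
  obtain ⟨R₀, hR₀⟩ := hvanish (ε / 2) (by positivity)
  set R : ℝ := max R₀ 1 with hRdef
  have hR : 0 < R := lt_of_lt_of_le one_pos (le_max_right _ _)
  set i0 : Fin k := ⟨0, hk⟩ with hi0
  have hvan : ∀ x y, R ≤ dist (x i0) (y i0) → |f x y| ≤ ε / 2 := fun x y h =>
    hR₀ x y ⟨i0, i0, Or.inl ((le_max_left _ _).trans h)⟩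
  set δ : ℝ := ε / (2 * (C + 1)) with hδdef
  have hδ : 0 < δ := by positivity
  have hev : ∀ᶠ n in atTop,
      (⨆ x : EuclideanSpace ℝ (Fin d), γ n (Metric.ball x R)) < ENNReal.ofReal δ :=
    (hdis R hR).eventually_lt_const (ENNReal.ofReal_pos.2 hδ)
  filter_upwards [hev] with n hn
  haveI : IsFiniteMeasure (γ n) := ⟨lt_of_le_of_lt (hγ1 n) ENNReal.one_lt_top⟩
  haveI : IsFiniteMeasure (η n) := ⟨lt_of_le_of_lt (hη1 n) ENNReal.one_lt_top⟩
  set μ : Measure (Fin k → EuclideanSpace ℝ (Fin d)) := Measure.pi fun _ => γ n with hμdef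
  set ν : Measure (Fin k → EuclideanSpace ℝ (Fin d)) := Measure.pi fun _ => η n with hνdef
  have hμ1 : μ Set.univ ≤ 1 := by
    rw [hμdef, ← Set.pi_univ Set.univ, Measure.pi_pi]
    exact Finset.prod_le_one' fun i _ => hγ1 n
  have hν1 : ν Set.univ ≤ 1 := by
    rw [hνdef, ← Set.pi_univ Set.univ, Measure.pi_pi]
    exact Finset.prod_le_one' fun i _ => hη1 n
  haveI : IsFiniteMeasure μ := ⟨lt_of_le_of_lt hμ1 ENNReal.one_lt_top⟩
  haveI : IsFiniteMeasure ν := ⟨lt_of_le_of_lt hν1 ENNReal.one_lt_top⟩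
  set S : Set ((Fin k → EuclideanSpace ℝ (Fin d)) × (Fin k → EuclideanSpace ℝ (Fin d))) :=
    {p | dist (p.1 i0) (p.2 i0) < R} with hSdef
  have hS : MeasurableSet S := by
    apply (isOpen_lt _ continuous_const).measurableSet
    exact ((continuous_apply i0).comp continuous_fst).dist
      ((continuous_apply i0).comp continuous_snd)
  -- measure of the bad set
  have hset : ∀ z : EuclideanSpace ℝ (Fin d),
      μ ((fun x : Fin k → EuclideanSpace ℝ (Fin d) => x i0) ⁻¹' Metric.ball z R)
        ≤ ⨆ x : EuclideanSpace ℝ (Fin d), γ n (Metric.ball x R) := by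
    intro z
    have hpre : ((fun x : Fin k → EuclideanSpace ℝ (Fin d) => x i0) ⁻¹' Metric.ball z R)
        = Set.pi Set.univ
          (Function.update (fun _ : Fin k => (Set.univ : Set (EuclideanSpace ℝ (Fin d)))) i0
            (Metric.ball z R)) := by
      ext x
      simp only [Set.mem_preimage, Set.mem_pi, Set.mem_univ, forall_true_left,
        Function.update_apply]
      constructor
      · intro h i
        split
        · next hi => subst hi; exact h
        · trivial
      · intro h
        have := h i0
        simpa using this
    rw [hμdef, hpre, Measure.pi_pi]
    calc (∏ i : Fin k, γ n
          (Function.update (fun _ : Fin k => (Set.univ : Set (EuclideanSpace ℝ (Fin d)))) i0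
            (Metric.ball z R) i))
        = γ n (Function.update (fun _ : Fin k => (Set.univ : Set (EuclideanSpace ℝ (Fin d)))) i0
            (Metric.ball z R) i0) * ∏ i ∈ Finset.univ.erase i0, γ n
          (Function.update (fun _ : Fin k => (Set.univ : Set (EuclideanSpace ℝ (Fin d)))) i0
            (Metric.ball z R) i) := (Finset.mul_prod_erase _ _ (Finset.mem_univ i0)).symm
      _ ≤ γ n (Metric.ball z R) * 1 := by
          rw [Function.update_self]
          exact mul_le_mul_of_nonneg_left (Finset.prod_le_one' fun i _ =>
            (measure_mono (Set.subset_univ _)).trans (hγ1 n)) zero_le'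
      _ = γ n (Metric.ball z R) := mul_one _
      _ ≤ ⨆ x : EuclideanSpace ℝ (Fin d), γ n (Metric.ball x R) :=
          le_iSup (fun x => γ n (Metric.ball x R)) z
  have hSm : (μ.prod ν) S ≤ ⨆ x : EuclideanSpace ℝ (Fin d), γ n (Metric.ball x R) := by
    rw [Measure.prod_apply_symm hS]
    calc ∫⁻ y, μ ((fun x => (x, y)) ⁻¹' S) ∂ν
        ≤ ∫⁻ _, (⨆ x : EuclideanSpace ℝ (Fin d), γ n (Metric.ball x R)) ∂ν :=
          lintegral_mono fun y => hset (y i0)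
      _ = (⨆ x : EuclideanSpace ℝ (Fin d), γ n (Metric.ball x R)) * ν Set.univ :=
          lintegral_const _
      _ ≤ (⨆ x : EuclideanSpace ℝ (Fin d), γ n (Metric.ball x R)) * 1 :=
          mul_le_mul_of_nonneg_left hν1 zero_le'
      _ = _ := mul_one _
  -- integrability
  have hF : Integrable (fun p : (Fin k → EuclideanSpace ℝ (Fin d)) ×
      (Fin k → EuclideanSpace ℝ (Fin d)) => f p.1 p.2) (μ.prod ν) :=
    ⟨hfc.aestronglyMeasurable, HasFiniteIntegral.of_bounded (C := C)
      (Filter.Eventually.of_forall fun p => by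
        rw [Real.norm_eq_abs]; exact hC _ _)⟩
  have hGint : Integrable (fun p : (Fin k → EuclideanSpace ℝ (Fin d)) ×
      (Fin k → EuclideanSpace ℝ (Fin d)) =>
      ε / 2 + C * S.indicator (fun _ => (1 : ℝ)) p) (μ.prod ν) :=
    (integrable_const _).add (((integrable_const (1 : ℝ)).indicator hS).const_mul C)
  have hIeq : (∫ x, ∫ y, f x y ∂ν ∂μ) = ∫ p, f p.1 p.2 ∂(μ.prod ν) :=
    (integral_prod _ hF).symm
  have hptwise : ∀ p : (Fin k → EuclideanSpace ℝ (Fin d)) ×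
      (Fin k → EuclideanSpace ℝ (Fin d)),
      ‖f p.1 p.2‖ ≤ ε / 2 + C * S.indicator (fun _ => (1 : ℝ)) p := by
    intro p
    rw [Real.norm_eq_abs]
    by_cases hp : p ∈ S
    · rw [Set.indicator_of_mem hp, mul_one]
      exact (hC _ _).trans (le_add_of_nonneg_left (by positivity))
    · rw [Set.indicator_of_notMem hp, mul_zero, add_zero]
      exact hvan _ _ (not_lt.1 hp)
  have hbound : ‖∫ x, ∫ y, f x y ∂ν ∂μ‖ ≤ ε / 2 + C * ((μ.prod ν) S).toReal := by
    rw [hIeq]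
    calc ‖∫ p, f p.1 p.2 ∂(μ.prod ν)‖ ≤ ∫ p, ‖f p.1 p.2‖ ∂(μ.prod ν) :=
          norm_integral_le_integral_norm _
      _ ≤ ∫ p, (ε / 2 + C * S.indicator (fun _ => (1 : ℝ)) p) ∂(μ.prod ν) :=
          integral_mono hF.norm hGint hptwise
      _ = ε / 2 * ((μ.prod ν) Set.univ).toReal + C * ((μ.prod ν) S).toReal := by
          rw [integral_add (integrable_const _)
            (((integrable_const (1 : ℝ)).indicator hS).const_mul C),
            integral_const, integral_const_mul, integral_indicator_const _ hS]
          simp [mul_comm, Measure.real]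
      _ ≤ ε / 2 * 1 + C * ((μ.prod ν) S).toReal := by
          gcongr
          · exact ENNReal.toReal_le_of_le_ofReal one_pos.le (by
              calc (μ.prod ν) Set.univ = μ Set.univ * ν Set.univ := by
                    rw [← Set.univ_prod_univ, Measure.prod_prod]
                _ ≤ 1 * 1 := mul_le_mul' hμ1 hν1
                _ = ENNReal.ofReal 1 := by simp)
      _ = ε / 2 + C * ((μ.prod ν) S).toReal := by ring
  have hto : ((μ.prod ν) S).toReal ≤ δ := by
    have h1 : (μ.prod ν) S ≤ ENNReal.ofReal δ := hSm.trans hn.le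
    calc ((μ.prod ν) S).toReal ≤ (ENNReal.ofReal δ).toReal :=
          ENNReal.toReal_mono ENNReal.ofReal_ne_top h1
      _ = δ := ENNReal.toReal_ofReal hδ.le
  calc ‖∫ x, ∫ y, f x y ∂ν ∂μ‖ ≤ ε / 2 + C * ((μ.prod ν) S).toReal := hbound
    _ ≤ ε / 2 + C * δ := by gcongr
    _ < ε / 2 + (C + 1) * δ := by
        have : 0 < δ := hδ
        nlinarith
    _ = ε := by
        rw [hδdef]
        field_simp
        ring
end

section
/- Let α_n, β_n be sub-probability measures on ℝᵈ, and let a_n, b_n ∈ ℝᵈ with |a_n − b_n| → ∞. Suppose the shifted measures α_n ⋆ δ_{a_n} and β_n ⋆ δ_{b_n} converge weakly to limits α, β (sub-probability measures). Then for every continuous function V : ℝᵈ → ℝ vanishing at infinity, ∬ V(x − y) α_n(dx) β_n(dy) → 0. -/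
open MeasureTheory Filter

/-- Tail lemma: if the shifted measures converge weakly to a finite measure, their
tails (relative to the shifts) are eventually uniformly small. -/
private lemma tail_small (d : ℕ) (μ : ℕ → Measure (EuclideanSpace ℝ (Fin d)))
    (a : ℕ → EuclideanSpace ℝ (Fin d))
    (hμ1 : ∀ n, μ n Set.univ ≤ 1)
    (μlim : Measure (EuclideanSpace ℝ (Fin d))) (hμlim : μlim Set.univ ≤ 1)
    (hconv : ∀ g : BoundedContinuousFunction (EuclideanSpace ℝ (Fin d)) ℝ,
      Tendsto (fun n => ∫ x, g x ∂((μ n).map (· + a n))) atTop (nhds (∫ x, g x ∂μlim)))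
    (ε : ℝ) (hε : 0 < ε) :
    ∃ R : ℝ, 0 ≤ R ∧ ∀ᶠ n in atTop, μ n {x | R < ‖x + a n‖} ≤ ENNReal.ofReal ε := by
  haveI : IsFiniteMeasure μlim := ⟨lt_of_le_of_lt hμlim ENNReal.one_lt_top⟩
  -- choose a radius where the limit has small tail
  have hInter : ⋂ k : ℕ, (Metric.closedBall (0 : EuclideanSpace ℝ (Fin d)) (k : ℝ))ᶜ = ∅ := by
    ext x
    simp only [Set.mem_iInter, Set.mem_compl_iff, Metric.mem_closedBall, dist_zero_right,
      Set.mem_empty_iff_false, iff_false, not_forall, not_not]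
    obtain ⟨k, hk⟩ := exists_nat_ge ‖x‖
    exact ⟨k, hk⟩
  have htend : Tendsto (fun k : ℕ =>
      μlim (Metric.closedBall (0 : EuclideanSpace ℝ (Fin d)) (k : ℝ))ᶜ) atTop (nhds 0) := by
    have h := tendsto_measure_iInter_atTop (μ := μlim)
      (s := fun k : ℕ => (Metric.closedBall (0 : EuclideanSpace ℝ (Fin d)) (k : ℝ))ᶜ)
      (fun k => measurableSet_closedBall.compl.nullMeasurableSet)
      (fun i j hij => Set.compl_subset_compl.2
        (Metric.closedBall_subset_closedBall (by exact_mod_cast hij)))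
      ⟨0, measure_ne_top _ _⟩
    rw [hInter, measure_empty] at h
    exact h
  obtain ⟨k, hk⟩ := (htend.eventually_lt_const
    (show (0 : ENNReal) < ENNReal.ofReal (ε / 2) from ENNReal.ofReal_pos.2 (by linarith))).exists
  set R₀ : ℝ := (k : ℝ) with hR₀
  have hR₀0 : 0 ≤ R₀ := Nat.cast_nonneg k
  -- the cutoff function
  set g : BoundedContinuousFunction (EuclideanSpace ℝ (Fin d)) ℝ :=
    BoundedContinuousFunction.mkOfBound
      ⟨fun z => min 1 (max (‖z‖ - R₀) 0), by fun_prop⟩ 1 (fun x y => by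
        simp only [ContinuousMap.coe_mk]
        rw [Real.dist_eq, abs_le]
        have h1 : (0:ℝ) ≤ min 1 (max (‖x‖ - R₀) 0) := le_min one_pos.le (le_max_right _ _)
        have h2 : min 1 (max (‖x‖ - R₀) 0) ≤ 1 := min_le_left _ _
        have h3 : (0:ℝ) ≤ min 1 (max (‖y‖ - R₀) 0) := le_min one_pos.le (le_max_right _ _)
        have h4 : min 1 (max (‖y‖ - R₀) 0) ≤ 1 := min_le_left _ _
        constructor <;> linarith) with hgdef
  have hgval : ∀ z, g z = min 1 (max (‖z‖ - R₀) 0) := fun z => rfl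
  have hg0 : ∀ z, 0 ≤ g z := fun z => by
    rw [hgval]; exact le_min one_pos.le (le_max_right _ _)
  have hg1 : ∀ z, g z ≤ 1 := fun z => by rw [hgval]; exact min_le_left _ _
  have hgone : ∀ z, R₀ + 1 ≤ ‖z‖ → g z = 1 := fun z hz => by
    rw [hgval]
    exact min_eq_left (le_trans (by linarith) (le_max_left _ _))
  have hgzero : ∀ z, ‖z‖ ≤ R₀ → g z = 0 := fun z hz => by
    rw [hgval, max_eq_right (by linarith), min_eq_right zero_le_one]
  -- the limit integral is small
  have hglim : ∫ x, g x ∂μlim ≤ (μlim (Metric.closedBall (0:EuclideanSpace ℝ (Fin d)) R₀)ᶜ).toReal := by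
    have hint : ∫ x, ((Metric.closedBall (0:EuclideanSpace ℝ (Fin d)) R₀)ᶜ).indicator
        (fun _ => (1:ℝ)) x ∂μlim
        = (μlim (Metric.closedBall (0:EuclideanSpace ℝ (Fin d)) R₀)ᶜ).toReal := by
      rw [integral_indicator_const _ measurableSet_closedBall.compl, smul_eq_mul, mul_one]; rfl
    rw [← hint]
    refine integral_mono (g.integrable μlim)
      ((integrable_const (1:ℝ)).indicator measurableSet_closedBall.compl) (fun z => ?_)
    by_cases hz : z ∈ (Metric.closedBall (0:EuclideanSpace ℝ (Fin d)) R₀)ᶜ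
    · rw [Set.indicator_of_mem hz]; exact hg1 z
    · rw [Set.indicator_of_notMem hz]
      rw [Set.notMem_compl_iff, Metric.mem_closedBall, dist_zero_right] at hz
      rw [hgzero z hz]
  have hlimlt : ∫ x, g x ∂μlim < ε := by
    have h2 : (μlim (Metric.closedBall (0:EuclideanSpace ℝ (Fin d)) R₀)ᶜ).toReal < ε / 2 := by
      rw [← ENNReal.ofReal_toReal (measure_ne_top μlim _)] at hk
      exact lt_of_not_ge fun hle => absurd hk (not_lt.2 (ENNReal.ofReal_le_ofReal hle))
    linarith [hglim]
  refine ⟨R₀ + 1, by linarith, ?_⟩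
  filter_upwards [(hconv g).eventually_lt_const hlimlt] with n hn
  haveI : IsFiniteMeasure ((μ n).map (· + a n)) := by
    constructor
    rw [Measure.map_apply (measurable_add_const (a n)) MeasurableSet.univ, Set.preimage_univ]
    exact lt_of_le_of_lt (hμ1 n) ENNReal.one_lt_top
  have hmaple : ((μ n).map (· + a n))
      (Metric.closedBall (0:EuclideanSpace ℝ (Fin d)) (R₀ + 1))ᶜ ≤ ENNReal.ofReal ε := by
    rw [ENNReal.le_ofReal_iff_toReal_le (measure_ne_top _ _) hε.le]
    have hind : (((μ n).map (· + a n))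
        (Metric.closedBall (0:EuclideanSpace ℝ (Fin d)) (R₀ + 1))ᶜ).toReal
        = ∫ x, ((Metric.closedBall (0:EuclideanSpace ℝ (Fin d)) (R₀+1))ᶜ).indicator
          (fun _ => (1:ℝ)) x ∂((μ n).map (· + a n)) := by
      rw [integral_indicator_const _ measurableSet_closedBall.compl, smul_eq_mul, mul_one]; rfl
    rw [hind]
    refine le_trans (integral_mono
      ((integrable_const (1:ℝ)).indicator measurableSet_closedBall.compl)
      (g.integrable _) (fun z => ?_)) hn.le
    by_cases hz : z ∈ (Metric.closedBall (0:EuclideanSpace ℝ (Fin d)) (R₀+1))ᶜ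
    · rw [Set.indicator_of_mem hz]
      rw [Set.mem_compl_iff, Metric.mem_closedBall, dist_zero_right, not_le] at hz
      rw [hgone z hz.le]
    · rw [Set.indicator_of_notMem hz]; exact hg0 z
  rw [Measure.map_apply (measurable_add_const (a n)) measurableSet_closedBall.compl] at hmaple
  have hpre : (· + a n) ⁻¹' (Metric.closedBall (0:EuclideanSpace ℝ (Fin d)) (R₀+1))ᶜ
      = {x | R₀ + 1 < ‖x + a n‖} := by
    ext x
    simp [Metric.mem_closedBall, dist_zero_right, not_le, dist_eq_norm, sub_neg_eq_add]
  rwa [hpre] at hmaple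

/-- Key estimate: if `V` is globally bounded by `C`, bounded by `ε` off `S × T`, and
`μ S, ν T ≤ ε`, then the double integral is at most `ε + 2Cε`. -/
private lemma key_est {d : ℕ} (μ ν : Measure (EuclideanSpace ℝ (Fin d)))
    (S T : Set (EuclideanSpace ℝ (Fin d))) (hS : MeasurableSet S) (hT : MeasurableSet T)
    (V : EuclideanSpace ℝ (Fin d) → ℝ) (C ε : ℝ) (hC : 0 ≤ C) (hε : 0 ≤ ε)
    (hVC : ∀ z, ‖V z‖ ≤ C)
    (hout : ∀ x ∉ S, ∀ y ∉ T, ‖V (x - y)‖ ≤ ε)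
    (hμ : μ Set.univ ≤ 1) (hν : ν Set.univ ≤ 1)
    (hμS : μ S ≤ ENNReal.ofReal ε) (hνT : ν T ≤ ENNReal.ofReal ε) :
    ‖∫ x, ∫ y, V (x - y) ∂ν ∂μ‖ ≤ ε + 2 * C * ε := by
  haveI : IsFiniteMeasure μ := ⟨lt_of_le_of_lt hμ ENNReal.one_lt_top⟩
  haveI : IsFiniteMeasure ν := ⟨lt_of_le_of_lt hν ENNReal.one_lt_top⟩
  have hν1 : (ν Set.univ).toReal ≤ 1 :=
    ENNReal.toReal_le_of_le_ofReal zero_le_one (by simpa using hν)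
  -- bound for the inner integral, everywhere
  have hinnerC : ∀ x, ‖∫ y, V (x - y) ∂ν‖ ≤ C := fun x => by
    calc ‖∫ y, V (x - y) ∂ν‖ ≤ C * (ν Set.univ).toReal :=
          norm_integral_le_of_norm_le_const (Eventually.of_forall fun y => hVC _)
      _ ≤ C * 1 := mul_le_mul_of_nonneg_left hν1 hC
      _ = C := mul_one C
  -- bound for the inner integral, off S
  have hinnerS : ∀ x ∉ S, ‖∫ y, V (x - y) ∂ν‖ ≤ C * ε + ε := by
    intro x hx
    have hlin : (∫⁻ y, ENNReal.ofReal ‖V (x - y)‖ ∂ν) ≤ ENNReal.ofReal (C * ε + ε) := by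
      calc (∫⁻ y, ENNReal.ofReal ‖V (x - y)‖ ∂ν)
          ≤ ∫⁻ y, (T.indicator (fun _ => ENNReal.ofReal C) y + ENNReal.ofReal ε) ∂ν := by
            refine lintegral_mono fun y => ?_
            by_cases hy : y ∈ T
            · rw [Set.indicator_of_mem hy]
              exact le_trans (ENNReal.ofReal_le_ofReal (hVC _)) le_self_add
            · rw [Set.indicator_of_notMem hy, zero_add]
              exact ENNReal.ofReal_le_ofReal (hout x hx y hy)
        _ = ENNReal.ofReal C * ν T + ENNReal.ofReal ε * ν Set.univ := by
            rw [lintegral_add_right _ measurable_const, lintegral_indicator_const hT,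
              lintegral_const]
        _ ≤ ENNReal.ofReal C * ENNReal.ofReal ε + ENNReal.ofReal ε * 1 := by
            gcongr
        _ = ENNReal.ofReal (C * ε + ε) := by
            rw [mul_one, ← ENNReal.ofReal_mul hC, ← ENNReal.ofReal_add (by positivity) hε]
    calc ‖∫ y, V (x - y) ∂ν‖ ≤ (∫⁻ y, ENNReal.ofReal ‖V (x - y)‖ ∂ν).toReal :=
          norm_integral_le_lintegral_norm _
      _ ≤ C * ε + ε := ENNReal.toReal_le_of_le_ofReal (by positivity) hlin
  -- outer bound
  have hlin2 : (∫⁻ x, ENNReal.ofReal ‖∫ y, V (x - y) ∂ν‖ ∂μ)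
      ≤ ENNReal.ofReal (C * ε + (C * ε + ε)) := by
    calc (∫⁻ x, ENNReal.ofReal ‖∫ y, V (x - y) ∂ν‖ ∂μ)
        ≤ ∫⁻ x, (S.indicator (fun _ => ENNReal.ofReal C) x + ENNReal.ofReal (C * ε + ε)) ∂μ := by
          refine lintegral_mono fun x => ?_
          by_cases hx : x ∈ S
          · rw [Set.indicator_of_mem hx]
            exact le_trans (ENNReal.ofReal_le_ofReal (hinnerC x)) le_self_add
          · rw [Set.indicator_of_notMem hx, zero_add]
            exact ENNReal.ofReal_le_ofReal (hinnerS x hx)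
      _ = ENNReal.ofReal C * μ S + ENNReal.ofReal (C * ε + ε) * μ Set.univ := by
          rw [lintegral_add_right _ measurable_const, lintegral_indicator_const hS,
            lintegral_const]
      _ ≤ ENNReal.ofReal C * ENNReal.ofReal ε + ENNReal.ofReal (C * ε + ε) * 1 := by
          gcongr
      _ = ENNReal.ofReal (C * ε + (C * ε + ε)) := by
          rw [mul_one, ← ENNReal.ofReal_mul hC, ← ENNReal.ofReal_add (by positivity) (by positivity)]
  have hfin : ‖∫ x, ∫ y, V (x - y) ∂ν ∂μ‖ ≤ C * ε + (C * ε + ε) :=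
    le_trans (norm_integral_le_lintegral_norm _)
      (ENNReal.toReal_le_of_le_ofReal (by positivity) hlin2)
  linarith

/-- If `α_n ⋆ δ_{a_n} ⇒ α`, `β_n ⋆ δ_{b_n} ⇒ β` weakly and `|a_n − b_n| → ∞`, then
`∬ V(x−y) α_n(dx) β_n(dy) → 0` for every continuous `V` vanishing at infinity. -/
theorem mutually_separated_shifts_integral_tendsto_zero (d : ℕ)
    (α β : ℕ → Measure (EuclideanSpace ℝ (Fin d)))
    (a b : ℕ → EuclideanSpace ℝ (Fin d))
    (hα1 : ∀ n, α n Set.univ ≤ 1) (hβ1 : ∀ n, β n Set.univ ≤ 1)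
    (αlim βlim : Measure (EuclideanSpace ℝ (Fin d)))
    (hαlim : αlim Set.univ ≤ 1) (hβlim : βlim Set.univ ≤ 1)
    (hαconv : ∀ g : BoundedContinuousFunction (EuclideanSpace ℝ (Fin d)) ℝ,
      Tendsto (fun n => ∫ x, g x ∂((α n).map (· + a n))) atTop
        (nhds (∫ x, g x ∂αlim)))
    (hβconv : ∀ g : BoundedContinuousFunction (EuclideanSpace ℝ (Fin d)) ℝ,
      Tendsto (fun n => ∫ x, g x ∂((β n).map (· + b n))) atTop
        (nhds (∫ x, g x ∂βlim)))
    (hsep : Tendsto (fun n => ‖a n - b n‖) atTop atTop)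
    (V : EuclideanSpace ℝ (Fin d) → ℝ)
    (hVc : Continuous V)
    (hV0 : Tendsto V (cocompact (EuclideanSpace ℝ (Fin d))) (nhds 0)) :
    Tendsto (fun n => ∫ x, ∫ y, V (x - y) ∂(β n) ∂(α n)) atTop (nhds 0) := by
  -- V is bounded
  set V₀ : ZeroAtInftyContinuousMap (EuclideanSpace ℝ (Fin d)) ℝ := ⟨⟨V, hVc⟩, hV0⟩ with hV₀def
  set C : ℝ := ‖V₀.toBCF‖ with hCdef
  have hC : 0 ≤ C := norm_nonneg _
  have hVC : ∀ z, ‖V z‖ ≤ C := fun z => V₀.toBCF.norm_coe_le_norm z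
  rw [NormedAddCommGroup.tendsto_nhds_zero]
  intro ε hε
  set ε' : ℝ := ε / (2 * (2 * C + 1)) with hε'def
  have hε' : 0 < ε' := by positivity
  obtain ⟨Rα, hRα0, hRα⟩ := tail_small d α a hα1 αlim hαlim hαconv ε' hε'
  obtain ⟨Rβ, hRβ0, hRβ⟩ := tail_small d β b hβ1 βlim hβlim hβconv ε' hε'
  set R : ℝ := max Rα Rβ with hRdef
  have hR0 : 0 ≤ R := le_trans hRα0 (le_max_left _ _)
  -- smallness of V at infinity
  have hVsmall : ∃ M : ℝ, ∀ z : EuclideanSpace ℝ (Fin d), M < ‖z‖ → ‖V z‖ ≤ ε' := by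
    have h1 : V ⁻¹' Metric.closedBall 0 ε' ∈ cocompact (EuclideanSpace ℝ (Fin d)) :=
      hV0 (Metric.closedBall_mem_nhds 0 hε')
    rw [← Metric.cobounded_eq_cocompact] at h1
    obtain ⟨r, -, hr⟩ := (Metric.hasBasis_cobounded_compl_closedBall
      (0 : EuclideanSpace ℝ (Fin d))).mem_iff.1 h1
    refine ⟨r, fun z hz => ?_⟩
    have hmem : z ∈ (Metric.closedBall (0 : EuclideanSpace ℝ (Fin d)) r)ᶜ := by
      simpa [Metric.mem_closedBall, dist_zero_right, not_le] using hz
    have := hr hmem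
    simpa [Metric.mem_closedBall, dist_zero_right] using this
  obtain ⟨M, hM⟩ := hVsmall
  have hab : ∀ᶠ n in atTop, M + 2 * R + 1 ≤ ‖a n - b n‖ := hsep.eventually_ge_atTop _
  filter_upwards [hRα, hRβ, hab] with n hSn hTn habn
  set S : Set (EuclideanSpace ℝ (Fin d)) := {x | R < ‖x + a n‖} with hSdef
  set T : Set (EuclideanSpace ℝ (Fin d)) := {y | R < ‖y + b n‖} with hTdef
  have hSmeas : MeasurableSet S :=
    (isOpen_lt continuous_const ((continuous_id.add continuous_const).norm)).measurableSet
  have hTmeas : MeasurableSet T :=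
    (isOpen_lt continuous_const ((continuous_id.add continuous_const).norm)).measurableSet
  have hμS : α n S ≤ ENNReal.ofReal ε' := by
    refine le_trans (measure_mono fun x hx => ?_) hSn
    exact lt_of_le_of_lt (le_max_left Rα Rβ) hx
  have hνT : β n T ≤ ENNReal.ofReal ε' := by
    refine le_trans (measure_mono fun y hy => ?_) hTn
    exact lt_of_le_of_lt (le_max_right Rα Rβ) hy
  have hout : ∀ x ∉ S, ∀ y ∉ T, ‖V (x - y)‖ ≤ ε' := by
    intro x hx y hy
    rw [hSdef, Set.mem_setOf_eq, not_lt] at hx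
    rw [hTdef, Set.mem_setOf_eq, not_lt] at hy
    refine hM _ ?_
    have hrw : x - y = ((x + a n) - (y + b n)) - (a n - b n) := by abel
    have h1 : ‖a n - b n‖ - ‖(x + a n) - (y + b n)‖ ≤ ‖x - y‖ := by
      rw [hrw]
      calc ‖a n - b n‖ - ‖(x + a n) - (y + b n)‖
          ≤ ‖(a n - b n) - ((x + a n) - (y + b n))‖ := norm_sub_norm_le _ _
        _ = ‖((x + a n) - (y + b n)) - (a n - b n)‖ := norm_sub_rev _ _
    have h2 : ‖(x + a n) - (y + b n)‖ ≤ 2 * R := by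
      calc ‖(x + a n) - (y + b n)‖ ≤ ‖x + a n‖ + ‖y + b n‖ := norm_sub_le _ _
        _ ≤ 2 * R := by linarith
    linarith
  have hest := key_est (α n) (β n) S T hSmeas hTmeas V C ε' hC hε'.le hVC hout
    (hα1 n) (hβ1 n) hμS hνT
  have heq : ε' + 2 * C * ε' = ε / 2 := by
    rw [hε'def]; field_simp; ring
  calc ‖∫ x, ∫ y, V (x - y) ∂(β n) ∂(α n)‖ ≤ ε' + 2 * C * ε' := hest
    _ = ε / 2 := heq
    _ < ε := by linarith
end

section
/- Let α_n, β_n be sub-probability measures on ℝᵈ and c_n ∈ ℝᵈ a sequence of shifts such that α_n ⋆ δ_{c_n} ⇒ α and β_n ⋆ δ_{c_n} ⇒ β weakly. Then for every continuous V : ℝᵈ → ℝ vanishing at infinity, ∬ V(x − y) α_n(dx) β_n(dy) → ∬ V(x − y) α(dx) β(dy). -/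
open MeasureTheory Filter

set_option linter.unusedSectionVars false
set_option linter.unusedSectionVars false
namespace CSIC
open Metric Set BoundedContinuousFunction

variable {E : Type*} [NormedAddCommGroup E] [MeasurableSpace E] [BorelSpace E] [ProperSpace E]

/-- the function `V` as a bounded continuous function -/
noncomputable def vb (V : E → ℝ) (hVc : Continuous V)
    (hV0 : Tendsto V (cocompact E) (nhds 0)) : BoundedContinuousFunction E ℝ :=
  ZeroAtInftyContinuousMap.toBCF ⟨⟨V, hVc⟩, hV0⟩

@[simp] lemma vb_apply (V : E → ℝ) (hVc : Continuous V)
    (hV0 : Tendsto V (cocompact E) (nhds 0)) (x : E) : vb V hVc hV0 x = V x := rfl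

lemma abs_V_le (V : E → ℝ) (hVc : Continuous V)
    (hV0 : Tendsto V (cocompact E) (nhds 0)) (z : E) : |V z| ≤ ‖vb V hVc hV0‖ :=
  (vb V hVc hV0).norm_coe_le_norm z

/-- `y ↦ V (x - y)` as a bounded continuous function -/
noncomputable def sb (V : E → ℝ) (hVc : Continuous V)
    (hV0 : Tendsto V (cocompact E) (nhds 0)) (x : E) : BoundedContinuousFunction E ℝ :=
  (vb V hVc hV0).compContinuous ⟨fun y => x - y, by fun_prop⟩

@[simp] lemma sb_apply (V : E → ℝ) (hVc : Continuous V)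
    (hV0 : Tendsto V (cocompact E) (nhds 0)) (x y : E) : sb V hVc hV0 x y = V (x - y) := rfl

lemma integrable_sb (V : E → ℝ) (hVc : Continuous V)
    (hV0 : Tendsto V (cocompact E) (nhds 0)) (x : E) (μ : Measure E) [IsFiniteMeasure μ] :
    Integrable (fun y => V (x - y)) μ :=
  (sb V hVc hV0 x).integrable μ

lemma W_cont (V : E → ℝ) (hVc : Continuous V)
    (hV0 : Tendsto V (cocompact E) (nhds 0)) (μ : Measure E) [IsFiniteMeasure μ] :
    Continuous (fun x => ∫ y, V (x - y) ∂μ) := by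
  rw [continuous_iff_continuousAt]
  intro x
  apply tendsto_integral_filter_of_dominated_convergence (fun _ => ‖vb V hVc hV0‖)
  · exact Eventually.of_forall fun x' =>
      ((hVc.comp (continuous_const.sub continuous_id)).aestronglyMeasurable)
  · exact Eventually.of_forall fun x' => ae_of_all _ fun y => by
      simpa [Real.norm_eq_abs] using abs_V_le V hVc hV0 (x' - y)
  · exact integrable_const _
  · exact ae_of_all _ fun y =>
      (hVc.comp (continuous_id.sub continuous_const)).continuousAt.tendsto

lemma abs_W_le (V : E → ℝ) (hVc : Continuous V)
    (hV0 : Tendsto V (cocompact E) (nhds 0)) (μ : Measure E) [IsFiniteMeasure μ]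
    (hμ : μ Set.univ ≤ 1) (x : E) :
    |∫ y, V (x - y) ∂μ| ≤ ‖vb V hVc hV0‖ := by
  have h1 : ((μ : Measure E) Set.univ).toReal ≤ 1 := by
    simpa using ENNReal.toReal_mono ENNReal.one_ne_top hμ
  calc |∫ y, V (x - y) ∂μ| ≤ ‖vb V hVc hV0‖ * (μ Set.univ).toReal := by
        simpa [Real.norm_eq_abs, measureReal_def] using
          norm_integral_le_of_norm_le_const (μ := μ) (f := fun y => V (x - y))
            (ae_of_all _ fun y => by
              simpa [Real.norm_eq_abs] using abs_V_le V hVc hV0 (x - y))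
    _ ≤ ‖vb V hVc hV0‖ * 1 := by
        exact mul_le_mul_of_nonneg_left h1 (norm_nonneg _)
    _ = ‖vb V hVc hV0‖ := mul_one _

/-- `x ↦ ∫ V (x-y) dμ(y)` as a bounded continuous function, for subprobability `μ`. -/
noncomputable def Wb (V : E → ℝ) (hVc : Continuous V)
    (hV0 : Tendsto V (cocompact E) (nhds 0)) (μ : Measure E) [IsFiniteMeasure μ]
    (hμ : μ Set.univ ≤ 1) : BoundedContinuousFunction E ℝ :=
  ofNormedAddCommGroup (fun x => ∫ y, V (x - y) ∂μ) (W_cont V hVc hV0 μ) (‖vb V hVc hV0‖)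
    (fun x => by simpa [Real.norm_eq_abs] using abs_W_le V hVc hV0 μ hμ x)

@[simp] lemma Wb_apply (V : E → ℝ) (hVc : Continuous V)
    (hV0 : Tendsto V (cocompact E) (nhds 0)) (μ : Measure E) [IsFiniteMeasure μ]
    (hμ : μ Set.univ ≤ 1) (x : E) : Wb V hVc hV0 μ hμ x = ∫ y, V (x - y) ∂μ := rfl


variable {E : Type*} [NormedAddCommGroup E] [MeasurableSpace E] [BorelSpace E] [ProperSpace E]

lemma tight_single (ρ : Measure E) [IsFiniteMeasure ρ] {ε : ℝ} (hε : 0 < ε) :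
    ∃ R : ℝ, 0 < R ∧ (ρ (closedBall (0:E) R)ᶜ).toReal ≤ ε := by
  have hmono : Monotone (fun n : ℕ => closedBall (0:E) n) := fun m n hmn =>
    closedBall_subset_closedBall (by exact_mod_cast hmn)
  have hU : (⋃ n : ℕ, closedBall (0:E) n) = univ := iUnion_closedBall_nat 0
  have h1 : Tendsto (fun n : ℕ => ρ (closedBall 0 n)) atTop (nhds (ρ univ)) := by
    simpa [hU, Function.comp_def] using tendsto_measure_iUnion_atTop (μ := ρ) hmono
  have h2 : Tendsto (fun n : ℕ => ρ (closedBall (0:E) n)ᶜ) atTop (nhds 0) := by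
    have hsub : ∀ n : ℕ, ρ (closedBall (0:E) n)ᶜ = ρ univ - ρ (closedBall 0 n) := fun n =>
      measure_compl measurableSet_closedBall (measure_ne_top _ _)
    simp only [hsub]
    simpa using ENNReal.Tendsto.sub (tendsto_const_nhds (x := ρ univ)) h1
      (Or.inl (measure_ne_top _ _))
  have h3 : ∀ᶠ n : ℕ in atTop, ρ (closedBall (0:E) n)ᶜ < ENNReal.ofReal ε :=
    h2.eventually_lt_const (by simp [hε])
  obtain ⟨n, hn⟩ := h3.exists
  refine ⟨(n : ℝ) + 1, by positivity, ?_⟩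
  have hmono2 : ρ (closedBall (0:E) ((n:ℝ)+1))ᶜ ≤ ρ (closedBall (0:E) n)ᶜ :=
    measure_mono (compl_subset_compl.mpr (closedBall_subset_closedBall (by linarith)))
  exact ENNReal.toReal_le_of_le_ofReal hε.le (hmono2.trans hn.le)

/-- continuous cutoff: 1 on `closedBall 0 R`, 0 outside `closedBall 0 (R+1)`. -/
noncomputable def cutoff (E : Type*) [NormedAddCommGroup E] (R : ℝ) :
    BoundedContinuousFunction E ℝ :=
  BoundedContinuousFunction.mkOfBound
    ⟨fun x => max 0 (min 1 (R + 1 - ‖x‖)), by fun_prop⟩ 1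
    (fun x y => by
      have hx0 : (0:ℝ) ≤ max 0 (min 1 (R + 1 - ‖x‖)) := le_max_left _ _
      have hx1 : max 0 (min 1 (R + 1 - ‖x‖)) ≤ 1 := max_le zero_le_one (min_le_left _ _)
      have hy0 : (0:ℝ) ≤ max 0 (min 1 (R + 1 - ‖y‖)) := le_max_left _ _
      have hy1 : max 0 (min 1 (R + 1 - ‖y‖)) ≤ 1 := max_le zero_le_one (min_le_left _ _)
      rw [Real.dist_eq, abs_le]
      constructor <;> simp only [ContinuousMap.coe_mk] <;> linarith)

lemma cutoff_nonneg (R : ℝ) (x : E) : 0 ≤ cutoff E R x := le_max_left _ _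

lemma cutoff_le_one (R : ℝ) (x : E) : cutoff E R x ≤ 1 := max_le zero_le_one (min_le_left _ _)

lemma cutoff_eq_one (R : ℝ) (x : E) (hx : ‖x‖ ≤ R) : cutoff E R x = 1 := by
  have : min 1 (R + 1 - ‖x‖) = 1 := min_eq_left (by linarith)
  simp only [cutoff, mkOfBound_coe]
  show max 0 (min 1 (R + 1 - ‖x‖)) = 1
  rw [this]; exact max_eq_right zero_le_one

lemma cutoff_eq_zero (R : ℝ) (x : E) (hx : R + 1 ≤ ‖x‖) : cutoff E R x = 0 := by
  show max 0 (min 1 (R + 1 - ‖x‖)) = 0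
  exact max_eq_left ((min_le_right _ _).trans (by linarith))

lemma tail_mono (ρ : Measure E) [IsFiniteMeasure ρ] {r r' : ℝ} (h : r ≤ r') :
    (ρ (closedBall (0:E) r')ᶜ).toReal ≤ (ρ (closedBall (0:E) r)ᶜ).toReal :=
  ENNReal.toReal_mono (measure_ne_top _ _)
    (measure_mono (compl_subset_compl.mpr (closedBall_subset_closedBall h)))

lemma toReal_compl_eq (ρ : Measure E) [IsFiniteMeasure ρ] (r : ℝ) :
    (ρ (closedBall (0:E) r)ᶜ).toReal = (ρ univ).toReal - (ρ (closedBall 0 r)).toReal := by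
  rw [measure_compl measurableSet_closedBall (measure_ne_top _ _),
    ENNReal.toReal_sub_of_le (measure_mono (subset_univ _)) (measure_ne_top _ _)]

lemma tight_seq (β : ℕ → Measure E) (βlim : Measure E)
    (hfin : ∀ n, IsFiniteMeasure (β n)) [IsFiniteMeasure βlim]
    (hconv : ∀ g : BoundedContinuousFunction E ℝ,
      Tendsto (fun n => ∫ x, g x ∂(β n)) atTop (nhds (∫ x, g x ∂βlim)))
    {ε : ℝ} (hε : 0 < ε) :
    ∃ R : ℝ, 0 < R ∧ (βlim (closedBall (0:E) R)ᶜ).toReal ≤ ε ∧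
      ∀ n, ((β n) (closedBall (0:E) R)ᶜ).toReal ≤ ε := by
  have hmass : Tendsto (fun n => ((β n) univ).toReal) atTop (nhds ((βlim univ).toReal)) := by
    have := hconv (BoundedContinuousFunction.const E (1:ℝ))
    simpa [integral_const, measureReal_def] using this
  obtain ⟨R₀, hR₀pos, hR₀⟩ := tight_single βlim (ε := ε/4) (by linarith)
  set g := cutoff E R₀ with hg
  have hlow : (βlim (closedBall (0:E) R₀)).toReal ≤ ∫ x, g x ∂βlim := by
    calc (βlim (closedBall (0:E) R₀)).toReal
        = ∫ _x in closedBall (0:E) R₀, (1:ℝ) ∂βlim := by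
          rw [setIntegral_const]; simp [measureReal_def]
      _ = ∫ x in closedBall (0:E) R₀, g x ∂βlim := by
          refine setIntegral_congr_fun measurableSet_closedBall (fun x hx => ?_)
          rw [cutoff_eq_one R₀ x (by simpa [mem_closedBall, dist_zero_right] using hx)]
      _ ≤ ∫ x, g x ∂βlim :=
          setIntegral_le_integral (g.integrable βlim) (ae_of_all _ fun x => cutoff_nonneg R₀ x)
  have hup : ∀ n, ∫ x, g x ∂(β n) ≤ ((β n) (closedBall (0:E) (R₀+1))).toReal := by
    intro n
    haveI := hfin n
    have hzero : ∫ x in (closedBall (0:E) (R₀+1))ᶜ, g x ∂(β n) = 0 := by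
      rw [setIntegral_congr_fun measurableSet_closedBall.compl
        (fun x hx => cutoff_eq_zero R₀ x (by
          simp only [mem_compl_iff, mem_closedBall, dist_zero_right, not_le] at hx
          linarith))]
      simp
    have hsplit := integral_add_compl (measurableSet_closedBall
      (x := (0:E)) (ε := R₀+1)) (g.integrable (β n))
    have hbd : ∫ x in closedBall (0:E) (R₀+1), g x ∂(β n)
        ≤ ∫ _x in closedBall (0:E) (R₀+1), (1:ℝ) ∂(β n) := by
      refine setIntegral_mono_on (g.integrable (β n)).integrableOn
        (integrableOn_const (measure_lt_top _ _).ne) measurableSet_closedBall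
        (fun x _ => cutoff_le_one R₀ x)
    rw [setIntegral_const] at hbd
    simp only [smul_eq_mul, mul_one] at hbd
    calc ∫ x, g x ∂(β n) = ∫ x in closedBall (0:E) (R₀+1), g x ∂(β n) := by
          rw [← hsplit, hzero, add_zero]
      _ ≤ ((β n) (closedBall (0:E) (R₀+1))).toReal := hbd
  have hkey : Tendsto (fun n => ((β n) univ).toReal - ∫ x, g x ∂(β n)) atTop
      (nhds ((βlim univ).toReal - ∫ x, g x ∂βlim)) := hmass.sub (hconv g)
  have hlim_le : (βlim univ).toReal - ∫ x, g x ∂βlim ≤ ε/4 := by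
    have h1 := toReal_compl_eq βlim R₀
    linarith
  have hev : ∀ᶠ n in atTop, ((β n) univ).toReal - ∫ x, g x ∂(β n) < ε/2 :=
    hkey.eventually_lt_const (by linarith)
  obtain ⟨N, hN⟩ := eventually_atTop.mp hev
  have hchoice : ∀ k : ℕ, ∃ R : ℝ, 0 < R ∧ ((β k) (closedBall (0:E) R)ᶜ).toReal ≤ ε := by
    intro k
    haveI := hfin k
    exact tight_single (β k) hε
  choose f hfpos hf using hchoice
  set R : ℝ := (R₀ + 1) + ∑ k ∈ Finset.range N, max (f k) 0 with hR
  have hsum0 : 0 ≤ ∑ k ∈ Finset.range N, max (f k) 0 :=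
    Finset.sum_nonneg fun k _ => le_max_right _ _
  have hRpos : 0 < R := by rw [hR]; linarith
  have hge1 : R₀ + 1 ≤ R := by rw [hR]; linarith
  have hgef : ∀ k < N, f k ≤ R := by
    intro k hk
    have h1 : max (f k) 0 ≤ ∑ j ∈ Finset.range N, max (f j) 0 :=
      Finset.single_le_sum (f := fun j => max (f j) 0) (fun i _ => le_max_right _ _)
        (Finset.mem_range.mpr hk)
    have h2 : f k ≤ max (f k) 0 := le_max_left _ _
    rw [hR]; linarith
  refine ⟨R, hRpos, ?_, ?_⟩
  · exact le_trans (tail_mono βlim (r := R₀) (r' := R) (by linarith)) (by linarith)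
  · intro n
    haveI := hfin n
    rcases lt_or_ge n N with hn | hn
    · exact le_trans (tail_mono (β n) (hgef n hn)) (hf n)
    · have h1 : ((β n) (closedBall (0:E) R)ᶜ).toReal
          ≤ ((β n) (closedBall (0:E) (R₀+1))ᶜ).toReal := tail_mono (β n) hge1
      have h2 := toReal_compl_eq (β n) (R₀+1)
      have h3 := hup n
      have h4 := hN n hn
      linarith


lemma unif_conv (V : E → ℝ) (hVc : Continuous V) (hV0 : Tendsto V (cocompact E) (nhds 0))
    (β : ℕ → Measure E) (βlim : Measure E)
    (hfin : ∀ n, IsFiniteMeasure (β n)) [IsFiniteMeasure βlim]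
    (hβ1 : ∀ n, β n univ ≤ 1) (hβlim : βlim univ ≤ 1)
    (hconv : ∀ g : BoundedContinuousFunction E ℝ,
      Tendsto (fun n => ∫ x, g x ∂(β n)) atTop (nhds (∫ x, g x ∂βlim)))
    {ε : ℝ} (hε : 0 < ε) :
    ∀ᶠ n in atTop, ∀ x : E,
      |(∫ y, V (x - y) ∂(β n)) - ∫ y, V (x - y) ∂βlim| ≤ ε := by
  set M : ℝ := ‖vb V hVc hV0‖ + 1 with hM
  have hMpos : 0 < M := by have := norm_nonneg (vb V hVc hV0); rw [hM]; linarith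
  have hVM : ∀ z, |V z| ≤ M := fun z => (abs_V_le V hVc hV0 z).trans (by rw [hM]; linarith)
  have hδ1 : 0 < ε / (8*M) := by positivity
  obtain ⟨R, hRpos, htail_lim, htail⟩ := tight_seq β βlim hfin hconv hδ1
  -- far-field bound for V
  obtain ⟨R', hR'pos, hVsmall⟩ : ∃ R' : ℝ, 0 < R' ∧ ∀ z : E, R' ≤ ‖z‖ → |V z| ≤ ε/8 := by
    have h8 : ∀ᶠ z in cocompact E, |V z| < ε/8 := by
      have := Metric.tendsto_nhds.mp hV0 (ε/8) (by linarith)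
      simpa [Real.dist_eq] using this
    obtain ⟨K, hK, hKs⟩ := (Filter.hasBasis_cocompact.eventually_iff).mp h8
    obtain ⟨r, hr⟩ := hK.isBounded.subset_closedBall 0
    refine ⟨max r 0 + 1, by positivity, fun z hz => ?_⟩
    refine (hKs (fun hzK => ?_)).le
    have h1 := hr hzK
    simp only [mem_closedBall, dist_zero_right] at h1
    have h2 : ‖z‖ ≤ max r 0 := h1.trans (le_max_left _ _)
    linarith
  -- uniform continuity modulus
  obtain ⟨δ, hδpos, hδ⟩ := Metric.uniformContinuous_iff.mp
    (ZeroAtInftyContinuousMap.uniformContinuous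
      (⟨⟨V, hVc⟩, hV0⟩ : ZeroAtInftyContinuousMap E ℝ)) (ε/8) (by linarith)
  -- finite cover of the compact region
  have hLcomp : IsCompact (closedBall (0:E) (R + R')) := isCompact_closedBall 0 _
  obtain ⟨t, hts, hcover⟩ := hLcomp.elim_nhds_subcover (fun x => ball x δ)
    (fun x _ => ball_mem_nhds x hδpos)
  -- pointwise convergence at the centers
  have hcenter : ∀ᶠ n in atTop, ∀ i ∈ t,
      |(∫ y, V (i - y) ∂(β n)) - ∫ y, V (i - y) ∂βlim| ≤ ε/8 := by
    rw [Filter.eventually_all_finset]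
    intro i _
    have h := hconv (sb V hVc hV0 i)
    simp only [sb_apply] at h
    have h2 := (Metric.tendsto_nhds.mp h) (ε/8) (by linarith)
    filter_upwards [h2] with n hn
    rw [Real.dist_eq] at hn
    exact hn.le
  have hmassn : ∀ n, ((β n) univ).toReal ≤ 1 := fun n => by
    simpa using ENNReal.toReal_mono ENNReal.one_ne_top (hβ1 n)
  have hmasslim : (βlim univ).toReal ≤ 1 := by
    simpa using ENNReal.toReal_mono ENNReal.one_ne_top hβlim
  filter_upwards [hcenter] with n hn x
  haveI := hfin n
  rcases le_or_gt ‖x‖ (R + R') with hx | hx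
  · -- near regime
    have hxL : x ∈ closedBall (0:E) (R+R') := by
      simpa [mem_closedBall, dist_zero_right] using hx
    have hx2 := hcover hxL
    rw [mem_iUnion₂] at hx2
    obtain ⟨i, hit, hxi⟩ := hx2
    have hdist : dist x i < δ := by simpa [mem_ball] using hxi
    have hshift : ∀ (μ : Measure E) [IsFiniteMeasure μ], μ univ ≤ 1 →
        |(∫ y, V (x - y) ∂μ) - ∫ y, V (i - y) ∂μ| ≤ ε/8 := by
      intro μ _ hμ1
      have hm : (μ univ).toReal ≤ 1 := by
        simpa using ENNReal.toReal_mono ENNReal.one_ne_top hμ1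
      rw [← integral_sub (integrable_sb V hVc hV0 x μ) (integrable_sb V hVc hV0 i μ)]
      have hbd : |∫ y, (V (x - y) - V (i - y)) ∂μ| ≤ (ε/8) * (μ univ).toReal := by
        simpa [Real.norm_eq_abs, measureReal_def] using norm_integral_le_of_norm_le_const (μ := μ)
          (f := fun y => V (x - y) - V (i - y)) (C := ε/8)
          (ae_of_all _ fun y => by
            have hd : dist (x - y) (i - y) < δ := by rwa [dist_sub_right]
            have := hδ hd
            rw [Real.dist_eq] at this
            simpa [Real.norm_eq_abs] using this.le)
      calc |∫ y, (V (x - y) - V (i - y)) ∂μ| ≤ (ε/8) * (μ univ).toReal := hbd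
        _ ≤ (ε/8) * 1 := mul_le_mul_of_nonneg_left hm (by linarith)
        _ = ε/8 := mul_one _
    have h1 := hshift (β n) (hβ1 n)
    have h2 := hshift βlim hβlim
    have h3 := hn i hit
    set a := ∫ y, V (x - y) ∂(β n)
    set b := ∫ y, V (i - y) ∂(β n)
    set cc := ∫ y, V (i - y) ∂βlim
    set dd := ∫ y, V (x - y) ∂βlim
    have t1 : |a - dd| ≤ |a - b| + |b - dd| := abs_sub_le a b dd
    have t2 : |b - dd| ≤ |b - cc| + |cc - dd| := abs_sub_le b cc dd
    have t3 : |cc - dd| = |dd - cc| := abs_sub_comm cc dd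
    have h2' : |dd - cc| ≤ ε/8 := h2
    linarith
  · -- far regime
    have hfar : ∀ (μ : Measure E) [IsFiniteMeasure μ], μ univ ≤ 1 →
        ((μ (closedBall (0:E) R)ᶜ).toReal ≤ ε/(8*M)) →
        |∫ y, V (x - y) ∂μ| ≤ ε/4 := by
      intro μ _ hμ1 hμtail
      have hmeas : AEStronglyMeasurable (fun y => V (x - y)) μ :=
        (hVc.comp (continuous_const.sub continuous_id)).aestronglyMeasurable
      have hsplit := integral_add_compl (measurableSet_closedBall (x := (0:E)) (ε := R))
        (integrable_sb V hVc hV0 x μ)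
      have hin : |∫ y in closedBall (0:E) R, V (x - y) ∂μ| ≤ ε/8 := by
        have hb : ∀ y ∈ closedBall (0:E) R, ‖V (x - y)‖ ≤ ε/8 := fun y hy => by
          have hy' : ‖y‖ ≤ R := by simpa [mem_closedBall, dist_zero_right] using hy
          have hnn : ‖x‖ - ‖y‖ ≤ ‖x - y‖ := norm_sub_norm_le x y
          have : R' ≤ ‖x - y‖ := by linarith
          simpa [Real.norm_eq_abs] using hVsmall _ this
        have hmK : (μ (closedBall (0:E) R)).toReal ≤ 1 := by
          have h1 : μ (closedBall (0:E) R) ≤ 1 :=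
            (measure_mono (subset_univ _)).trans hμ1
          simpa using ENNReal.toReal_mono ENNReal.one_ne_top h1
        calc |∫ y in closedBall (0:E) R, V (x - y) ∂μ|
            ≤ (ε/8) * (μ (closedBall (0:E) R)).toReal := by
              simpa [Real.norm_eq_abs, measureReal_def] using norm_setIntegral_le_of_norm_le_const
                (measure_lt_top μ _) hb
          _ ≤ (ε/8) * 1 := mul_le_mul_of_nonneg_left hmK (by linarith)
          _ = ε/8 := mul_one _
      have hout : |∫ y in (closedBall (0:E) R)ᶜ, V (x - y) ∂μ| ≤ ε/8 := by
        calc |∫ y in (closedBall (0:E) R)ᶜ, V (x - y) ∂μ|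
            ≤ M * (μ (closedBall (0:E) R)ᶜ).toReal := by
              simpa [Real.norm_eq_abs, measureReal_def] using norm_setIntegral_le_of_norm_le_const
                (measure_lt_top μ _) (f := fun y => V (x - y)) (fun y _ => by
                  simpa [Real.norm_eq_abs] using hVM (x - y))
          _ ≤ M * (ε/(8*M)) := mul_le_mul_of_nonneg_left hμtail hMpos.le
          _ = ε/8 := by field_simp
      calc |∫ y, V (x - y) ∂μ|
          = |(∫ y in closedBall (0:E) R, V (x - y) ∂μ)
              + ∫ y in (closedBall (0:E) R)ᶜ, V (x - y) ∂μ| := by rw [hsplit]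
        _ ≤ |∫ y in closedBall (0:E) R, V (x - y) ∂μ|
              + |∫ y in (closedBall (0:E) R)ᶜ, V (x - y) ∂μ| := abs_add_le _ _
        _ ≤ ε/8 + ε/8 := add_le_add hin hout
        _ = ε/4 := by ring
    have h1 := hfar (β n) (hβ1 n) (htail n)
    have h2 := hfar βlim hβlim htail_lim
    calc |(∫ y, V (x - y) ∂(β n)) - ∫ y, V (x - y) ∂βlim|
        ≤ |∫ y, V (x - y) ∂(β n)| + |∫ y, V (x - y) ∂βlim| := abs_sub _ _
      _ ≤ ε/4 + ε/4 := add_le_add h1 h2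
      _ ≤ ε := by linarith

lemma key (α β : ℕ → Measure E)
    (hαfin : ∀ n, IsFiniteMeasure (α n)) (hβfin : ∀ n, IsFiniteMeasure (β n))
    (hα1 : ∀ n, α n univ ≤ 1) (hβ1 : ∀ n, β n univ ≤ 1)
    (αlim βlim : Measure E) [IsFiniteMeasure αlim] [IsFiniteMeasure βlim]
    (hαlim : αlim univ ≤ 1) (hβlim : βlim univ ≤ 1)
    (hαconv : ∀ g : BoundedContinuousFunction E ℝ,
      Tendsto (fun n => ∫ x, g x ∂(α n)) atTop (nhds (∫ x, g x ∂αlim)))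
    (hβconv : ∀ g : BoundedContinuousFunction E ℝ,
      Tendsto (fun n => ∫ x, g x ∂(β n)) atTop (nhds (∫ x, g x ∂βlim)))
    (V : E → ℝ) (hVc : Continuous V) (hV0 : Tendsto V (cocompact E) (nhds 0)) :
    Tendsto (fun n => ∫ x, ∫ y, V (x - y) ∂(β n) ∂(α n)) atTop
      (nhds (∫ x, ∫ y, V (x - y) ∂βlim ∂αlim)) := by
  rw [Metric.tendsto_atTop]
  intro ε hε
  have hW := hαconv (Wb V hVc hV0 βlim hβlim)
  simp only [Wb_apply] at hW
  have hWev := (Metric.tendsto_nhds.mp hW) (ε/2) (by linarith)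
  have hunif := unif_conv V hVc hV0 β βlim hβfin hβ1 hβlim hβconv (ε := ε/4) (by linarith)
  obtain ⟨N, hN⟩ := eventually_atTop.mp (hWev.and hunif)
  refine ⟨N, fun n hn => ?_⟩
  obtain ⟨h1, h2⟩ := hN n hn
  haveI := hαfin n; haveI := hβfin n
  rw [Real.dist_eq]
  have hint1 : Integrable (fun x => ∫ y, V (x - y) ∂(β n)) (α n) :=
    (Wb V hVc hV0 (β n) (hβ1 n)).integrable (α n)
  have hint2 : Integrable (fun x => ∫ y, V (x - y) ∂βlim) (α n) :=
    (Wb V hVc hV0 βlim hβlim).integrable (α n)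
  have hsub : |(∫ x, ∫ y, V (x - y) ∂(β n) ∂(α n)) -
      ∫ x, ∫ y, V (x - y) ∂βlim ∂(α n)| ≤ ε/4 := by
    rw [← integral_sub hint1 hint2]
    have hm : ((α n) univ).toReal ≤ 1 := by
      simpa using ENNReal.toReal_mono ENNReal.one_ne_top (hα1 n)
    calc |∫ x, ((∫ y, V (x - y) ∂(β n)) - ∫ y, V (x - y) ∂βlim) ∂(α n)|
        ≤ (ε/4) * ((α n) univ).toReal := by
          simpa [Real.norm_eq_abs, measureReal_def] using norm_integral_le_of_norm_le_const (μ := α n)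
            (f := fun x => (∫ y, V (x - y) ∂(β n)) - ∫ y, V (x - y) ∂βlim) (C := ε/4)
            (ae_of_all _ fun x => by simpa [Real.norm_eq_abs] using h2 x)
      _ ≤ (ε/4) * 1 := mul_le_mul_of_nonneg_left hm (by linarith)
      _ = ε/4 := mul_one _
  have htri := abs_sub_le (∫ x, ∫ y, V (x - y) ∂(β n) ∂(α n))
    (∫ x, ∫ y, V (x - y) ∂βlim ∂(α n)) (∫ x, ∫ y, V (x - y) ∂βlim ∂αlim)
  rw [Real.dist_eq] at h1
  linarith

end CSIC


/-- If `α_n ⋆ δ_{c_n} ⇒ α` and `β_n ⋆ δ_{c_n} ⇒ β` weakly (common shifts), then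
`∬ V(x−y) α_n(dx) β_n(dy) → ∬ V(x−y) α(dx) β(dy)` for `V` continuous vanishing at
infinity. -/
theorem common_shift_integral_convergence (d : ℕ)
    (α β : ℕ → Measure (EuclideanSpace ℝ (Fin d)))
    (c : ℕ → EuclideanSpace ℝ (Fin d))
    (hα1 : ∀ n, α n Set.univ ≤ 1) (hβ1 : ∀ n, β n Set.univ ≤ 1)
    (αlim βlim : Measure (EuclideanSpace ℝ (Fin d)))
    (hαlim : αlim Set.univ ≤ 1) (hβlim : βlim Set.univ ≤ 1)
    (hαconv : ∀ g : BoundedContinuousFunction (EuclideanSpace ℝ (Fin d)) ℝ,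
      Tendsto (fun n => ∫ x, g x ∂((α n).map (· + c n))) atTop
        (nhds (∫ x, g x ∂αlim)))
    (hβconv : ∀ g : BoundedContinuousFunction (EuclideanSpace ℝ (Fin d)) ℝ,
      Tendsto (fun n => ∫ x, g x ∂((β n).map (· + c n))) atTop
        (nhds (∫ x, g x ∂βlim)))
    (V : EuclideanSpace ℝ (Fin d) → ℝ)
    (hVc : Continuous V)
    (hV0 : Tendsto V (cocompact (EuclideanSpace ℝ (Fin d))) (nhds 0)) :
    Tendsto (fun n => ∫ x, ∫ y, V (x - y) ∂(β n) ∂(α n)) atTop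
      (nhds (∫ x, ∫ y, V (x - y) ∂βlim ∂αlim)) := by
  have hαfin : ∀ n, IsFiniteMeasure (α n) := fun n =>
    ⟨lt_of_le_of_lt (hα1 n) ENNReal.one_lt_top⟩
  have hβfin : ∀ n, IsFiniteMeasure (β n) := fun n =>
    ⟨lt_of_le_of_lt (hβ1 n) ENNReal.one_lt_top⟩
  haveI : IsFiniteMeasure αlim := ⟨lt_of_le_of_lt hαlim ENNReal.one_lt_top⟩
  haveI : IsFiniteMeasure βlim := ⟨lt_of_le_of_lt hβlim ENNReal.one_lt_top⟩
  set α' : ℕ → Measure (EuclideanSpace ℝ (Fin d)) := fun n => (α n).map (· + c n) with hα'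
  set β' : ℕ → Measure (EuclideanSpace ℝ (Fin d)) := fun n => (β n).map (· + c n) with hβ'
  have hmap_univ : ∀ (μ : Measure (EuclideanSpace ℝ (Fin d))) (n : ℕ),
      μ.map (· + c n) Set.univ = μ Set.univ := fun μ n => by
    rw [Measure.map_apply (measurable_add_const (c n)) MeasurableSet.univ, Set.preimage_univ]
  have hα'fin : ∀ n, IsFiniteMeasure (α' n) := fun n =>
    ⟨by rw [hmap_univ]; exact lt_of_le_of_lt (hα1 n) ENNReal.one_lt_top⟩
  have hβ'fin : ∀ n, IsFiniteMeasure (β' n) := fun n =>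
    ⟨by rw [hmap_univ]; exact lt_of_le_of_lt (hβ1 n) ENNReal.one_lt_top⟩
  have hα'1 : ∀ n, α' n Set.univ ≤ 1 := fun n => by
    rw [hα', hmap_univ]; exact hα1 n
  have hβ'1 : ∀ n, β' n Set.univ ≤ 1 := fun n => by
    rw [hβ', hmap_univ]; exact hβ1 n
  have hEq : ∀ n, ∫ x, ∫ y, V (x - y) ∂(β' n) ∂(α' n)
      = ∫ x, ∫ y, V (x - y) ∂(β n) ∂(α n) := by
    intro n
    haveI := hαfin n; haveI := hβfin n; haveI := hβ'fin n; haveI := hα'fin n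
    have hInner : ∀ x, ∫ y, V (x - y) ∂(β' n) = ∫ y, V ((x - c n) - y) ∂(β n) := by
      intro x
      rw [hβ', integral_map (measurable_add_const (c n)).aemeasurable
        (Continuous.aestronglyMeasurable (by fun_prop : Continuous (fun y => V (x - y))))]
      simp only [sub_add_eq_sub_sub, sub_right_comm]
    have hsm : AEStronglyMeasurable (fun x => ∫ y, V ((x - c n) - y) ∂(β n)) (α' n) :=
      ((CSIC.W_cont V hVc hV0 (β n)).comp (continuous_id.sub continuous_const)).aestronglyMeasurable
    calc ∫ x, ∫ y, V (x - y) ∂(β' n) ∂(α' n)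
        = ∫ x, ∫ y, V ((x - c n) - y) ∂(β n) ∂(α' n) :=
          integral_congr_ae (ae_of_all _ fun x => hInner x)
      _ = ∫ x, ∫ y, V (((x + c n) - c n) - y) ∂(β n) ∂(α n) := by
          rw [hα', integral_map (measurable_add_const (c n)).aemeasurable hsm]
      _ = ∫ x, ∫ y, V (x - y) ∂(β n) ∂(α n) := by
          simp only [add_sub_cancel_right]
  have hmain := CSIC.key α' β' hα'fin hβ'fin hα'1 hβ'1 αlim βlim hαlim hβlim hαconv hβconv V hVc hV0
  exact hmain.congr hEq
end
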